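/- Under NRZI encoding, a binary sequence x ∈ {0,1}^n of charge σ (the sum of the bipolar sequence z) that begins with a one and has first one-run-length j satisfies: the charge of the remaining subsequence of length n-j beginning with a one equals -σ - j. Consequently, if C_n^σ counts (d,k,r)-sequences of length n beginning with one whose NRZI charge is σ, then for σ ≠ -n and n ≥ d+1: C_n^σ = Σ_{j=d+1}^{min(n,k+1)} C_{n-j}^{-σ-j}. -/

import Mathlib

/-- Weight of a binary sequence: number of ones. -/
def wt (l : List Bool) : ℕ := l.count true

/-- Length of the leading run of zeros. -/
def leadZeros (l : List Bool) : ℕ := (l.takeWhile (fun b => !b)).length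

/-- Length of the trailing run of zeros. -/
def trailZeros (l : List Bool) : ℕ := (l.reverse.takeWhile (fun b => !b)).length

/-- Every internal run of zeros (between two consecutive ones) has length in `[d, k]`. -/
def internalOK (d k : ℕ) (l : List Bool) : Prop :=
  ∀ i j : ℕ, i < j → j < l.length → l.getD i false = true → l.getD j false = true →
    (∀ m, i < m → m < j → l.getD m false = false) →
    d ≤ j - i - 1 ∧ j - i - 1 ≤ k

/-- NRZI charge accumulator: current bipolar level `z`, remaining bits. -/
def chargeAux : ℤ → List Bool → ℤ
  | _, [] => 0
  | z, b :: t => (if b then -z else z) + chargeAux (if b then -z else z) t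

/-- NRZI charge (digital sum) of a binary sequence. -/
def charge (l : List Bool) : ℤ := chargeAux 1 l

/-- Number of (d,k,r)-sequences of length n and weight ν beginning with a one
(the empty sequence is allowed, giving `A 0 0 = 1`). -/
noncomputable def Adkr (d k r n ν : ℕ) : ℕ :=
  Nat.card {l : List Bool // l.length = n ∧ (l ≠ [] → l.head? = some true) ∧
    internalOK d k l ∧ trailZeros l ≤ r ∧ wt l = ν}

/-- Number of (d,k,l,r)-sequences of length n and weight ν. -/
noncomputable def Adklr (d k L r n ν : ℕ) : ℕ :=
  Nat.card {x : List Bool // x.length = n ∧ leadZeros x ≤ L ∧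
    internalOK d k x ∧ trailZeros x ≤ r ∧ wt x = ν}

/-- Number of (d,k,r)-sequences of length n beginning with a one, with NRZI charge σ. -/
noncomputable def Cdkr (d k r n : ℕ) (σ : ℤ) : ℕ :=
  Nat.card {l : List Bool // l.length = n ∧ (l ≠ [] → l.head? = some true) ∧
    internalOK d k l ∧ trailZeros l ≤ r ∧ charge l = σ}

/-- Number of (d,k,l,r)-sequences of length n with NRZI charge σ. -/
noncomputable def Cdklr (d k L r n : ℕ) (σ : ℤ) : ℕ :=
  Nat.card {x : List Bool // x.length = n ∧ leadZeros x ≤ L ∧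
    internalOK d k x ∧ trailZeros x ≤ r ∧ charge x = σ}

/-- Binomial coefficient with integer upper argument; zero when the upper argument is negative. -/
def ibin (a : ℤ) (b : ℕ) : ℤ := if 0 ≤ a then (a.toNat.choose b : ℤ) else 0

section helpers
lemma chargeAux_neg (l : List Bool) : ∀ z, chargeAux (-z) l = -chargeAux z l := by
  induction l with
  | nil => intro z; simp [chargeAux]
  | cons b t ih =>
    intro z; cases b <;> simp [chargeAux, ih, neg_add] <;> ring
lemma chargeAux_rep (m : ℕ) (y : List Bool) : ∀ z,
    chargeAux z (List.replicate m false ++ y) = m * z + chargeAux z y := by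
  induction m with
  | zero => intro z; simp
  | succ p ih => intro z; simp [List.replicate_succ, chargeAux, ih]; ring
lemma part1 (j : ℕ) (y : List Bool) (hj : 1 ≤ j) :
    charge (true :: (List.replicate (j - 1) false ++ y)) = -(charge y) - j := by
  have h : charge (true :: (List.replicate (j-1) false ++ y))
      = -1 + ((j-1 : ℕ) * (-1) + chargeAux (-1) y) := by
    simp [charge, chargeAux, chargeAux_rep]
  rw [h, show ((-1 : ℤ)) = -(1:ℤ) by ring, chargeAux_neg]
  have h2 : ((j - 1 : ℕ) : ℤ) = (j : ℤ) - 1 := by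
    have := Nat.cast_sub hj (R := ℤ); simpa using this
  rw [h2]; unfold charge; ring

lemma takeWhile_app (a b : List Bool) (ha : true ∈ a) :
    (a ++ b).takeWhile (fun x => !x) = a.takeWhile (fun x => !x) := by
  induction a with
  | nil => simp at ha
  | cons c t ih =>
    cases c
    · simp only [List.mem_cons] at ha
      simp [List.takeWhile_cons, ih (by tauto)]
    · simp [List.takeWhile_cons]
lemma trailZeros_app (p y : List Bool) (hy : true ∈ y) :
    trailZeros (p ++ y) = trailZeros y := by
  unfold trailZeros
  rw [List.reverse_append, takeWhile_app _ _ (by simpa using hy)]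
lemma leadZeros_rep_app (m : ℕ) (y : List Bool) (hy : y = [] ∨ y.head? = some true) :
    leadZeros (List.replicate m false ++ y) = m := by
  unfold leadZeros
  induction m with
  | zero =>
    rcases hy with h | h
    · simp [h]
    · cases y with
      | nil => simp
      | cons c t => simp at h; simp [h, List.takeWhile_cons]
  | succ p ih =>
    rw [List.replicate_succ, List.cons_append, List.takeWhile_cons]
    simpa using ih
lemma dropWhile_head (t : List Bool) (ht : true ∈ t) :
    (t.dropWhile (fun b => !b)).head? = some true := by
  induction t with
  | nil => simp at ht
  | cons c s ih =>
    cases c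
    · simp only [List.mem_cons] at ht
      simp [List.dropWhile_cons, ih (by tauto)]
    · simp [List.dropWhile_cons]
lemma takeWhile_eq_rep (t : List Bool) :
    t.takeWhile (fun b => !b) = List.replicate (leadZeros t) false := by
  apply List.eq_replicate_of_mem
  intro b hb
  have := List.mem_takeWhile_imp hb
  simpa using this
lemma decomp (t : List Bool) (ht : true ∈ t) :
    t = List.replicate (leadZeros t) false ++ t.dropWhile (fun b => !b) ∧
    (t.dropWhile (fun b => !b)).head? = some true := by
  refine ⟨?_, dropWhile_head t ht⟩
  conv_lhs => rw [← List.takeWhile_append_dropWhile (p := fun b => !b) (l := t)]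
  rw [takeWhile_eq_rep]

lemma getD_Lmid (m : ℕ) (y : List Bool) (i : ℕ) (h1 : 1 ≤ i) (h2 : i ≤ m) :
    (true :: (List.replicate m false ++ y)).getD i false = false := by
  obtain ⟨p, rfl⟩ : ∃ p, i = p + 1 := ⟨i - 1, by omega⟩
  rw [List.getD_cons_succ, List.getD_append _ _ _ _ (by simp; omega)]
  rw [List.getD_eq_getElem _ _ (by simp; omega)]; simp
lemma getD_Lhi (m : ℕ) (y : List Bool) (i : ℕ) (h : m + 1 ≤ i) :
    (true :: (List.replicate m false ++ y)).getD i false = y.getD (i - m - 1) false := by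
  obtain ⟨p, rfl⟩ : ∃ p, i = p + 1 := ⟨i - 1, by omega⟩
  rw [List.getD_cons_succ, List.getD_append_right _ _ _ _ (by simp; omega)]
  congr 1; simp; omega
lemma getD_true_lt (l : List Bool) (i : ℕ) (h : l.getD i false = true) : i < l.length := by
  by_contra hc
  rw [List.getD_eq_default _ _ (by omega)] at h; exact absurd h (by simp)
lemma head_getD (y : List Bool) (h : y.head? = some true) : y.getD 0 false = true := by
  cases y with
  | nil => simp at h
  | cons a t => simp at h; simp [h]

lemma internalOK_fwd (d k m : ℕ) (y : List Bool) (hdm : d ≤ m) (hmk : m ≤ k)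
    (hy : y = [] ∨ y.head? = some true) (hI : internalOK d k y) :
    internalOK d k (true :: (List.replicate m false ++ y)) := by
  intro i j hij hjlen hi hj hbet
  have hjm : ¬ (1 ≤ j ∧ j ≤ m) := fun ⟨a, b⟩ => by
    rw [getD_Lmid m y j a b] at hj; exact absurd hj (by simp)
  have hjm' : m + 1 ≤ j := by omega
  rw [getD_Lhi m y j hjm'] at hj
  have hylen : j - m - 1 < y.length := getD_true_lt _ _ hj
  have hy' : y.head? = some true := by
    rcases hy with h | h
    · subst h; simp at hylen
    · exact h
  rcases Nat.eq_zero_or_pos i with rfl | hi1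
  · have hj1 : j = m + 1 := by
      by_contra hne
      have h3 : m + 1 < j := by omega
      have h4 := hbet (m + 1) (by omega) h3
      rw [getD_Lhi m y (m+1) le_rfl] at h4
      rw [show m + 1 - m - 1 = 0 by omega] at h4
      rw [head_getD y hy'] at h4; exact absurd h4 (by simp)
    constructor <;> omega
  · have him : ¬ (1 ≤ i ∧ i ≤ m) := fun ⟨a, b⟩ => by
      rw [getD_Lmid m y i a b] at hi; exact absurd hi (by simp)
    have him' : m + 1 ≤ i := by omega
    rw [getD_Lhi m y i him'] at hi
    have h5 := hI (i - m - 1) (j - m - 1) (by omega) hylen hi hj ?_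
    · constructor <;> omega
    · intro q hq1 hq2
      have h6 := hbet (q + m + 1) (by omega) (by omega)
      rw [getD_Lhi m y (q + m + 1) (by omega)] at h6
      rw [show q + m + 1 - m - 1 = q by omega] at h6
      exact h6
lemma internalOK_bwd (d k m : ℕ) (y : List Bool)
    (hI : internalOK d k (true :: (List.replicate m false ++ y))) :
    internalOK d k y := by
  intro i j hij hjlen hi hj hbet
  have h := hI (m + 1 + i) (m + 1 + j) (by omega)
    (by simp; omega)
    (by rw [getD_Lhi m y _ (by omega), show m + 1 + i - m - 1 = i by omega]; exact hi)
    (by rw [getD_Lhi m y _ (by omega), show m + 1 + j - m - 1 = j by omega]; exact hj)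
    ?_
  · constructor <;> omega
  · intro q hq1 hq2
    rw [getD_Lhi m y q (by omega)]
    exact hbet (q - m - 1) (by omega) (by omega)
lemma internalOK_gap (d k m : ℕ) (y : List Bool) (hy : y.head? = some true)
    (hI : internalOK d k (true :: (List.replicate m false ++ y))) :
    d ≤ m ∧ m ≤ k := by
  have hyne : 0 < y.length := by
    cases y with
    | nil => simp at hy
    | cons a t => simp
  have h := hI 0 (m + 1) (by omega) (by simp; omega) rfl
    (by rw [getD_Lhi m y _ le_rfl, show m + 1 - m - 1 = 0 by omega]; exact head_getD y hy)
    (fun q h1 h2 => getD_Lmid m y q (by omega) (by omega))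
  constructor <;> omega

def CP (d k r n : ℕ) (σ : ℤ) (l : List Bool) : Prop :=
  l.length = n ∧ (l ≠ [] → l.head? = some true) ∧
    internalOK d k l ∧ trailZeros l ≤ r ∧ charge l = σ

lemma finite_CP (d k r n : ℕ) (σ : ℤ) : Finite {l : List Bool // CP d k r n σ l} := by
  have h : {l : List Bool | CP d k r n σ l}.Finite :=
    (List.finite_length_eq Bool n).subset (fun l hl => hl.1)
  exact h.to_subtype

lemma mem_true (y : List Bool) (h : y.head? = some true) : true ∈ y := by
  cases y with
  | nil => simp at h
  | cons a t => simp at h; subst h; simp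

lemma count_main (d k r n : ℕ) (σ : ℤ) (hk : d ≤ k) (hσ : σ ≠ -(n : ℤ)) (hn : d + 1 ≤ n) :
    Cdkr d k r n σ =
      ∑ j ∈ Finset.Icc (d + 1) (min n (k + 1)), Cdkr d k r (n - j) (-σ - j) := by
  set S := Finset.Icc (d + 1) (min n (k + 1)) with hS
  -- the forward map
  have key : ∀ (j : ℕ), j ∈ S → ∀ (y : List Bool), CP d k r (n - j) (-σ - j) y →
      CP d k r n σ (true :: (List.replicate (j - 1) false ++ y)) := by
    intro j hj y hy
    rw [hS, Finset.mem_Icc] at hj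
    obtain ⟨hylen, hyhead, hyok, hytr, hych⟩ := hy
    have hyne : y ≠ [] := by
      rintro rfl
      have h1 : n = j := by simp at hylen; omega
      apply hσ
      have : charge ([] : List Bool) = 0 := rfl
      rw [this] at hych; omega
    have hh := hyhead hyne
    have htm := mem_true y hh
    refine ⟨?_, fun _ => rfl, ?_, ?_, ?_⟩
    · simp; omega
    · exact internalOK_fwd d k (j-1) y (by omega) (by omega) (Or.inr hh) hyok
    · rw [show (true :: (List.replicate (j - 1) false ++ y))
          = (true :: List.replicate (j - 1) false) ++ y by simp]
      rw [trailZeros_app _ _ htm]; exact hytr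
    · rw [part1 j y (by omega), hych]; push_cast; ring
  -- sigma type
  haveI : ∀ j : S, Finite {y : List Bool // CP d k r (n - (j:ℕ)) (-σ - (j:ℕ)) y} :=
    fun j => finite_CP _ _ _ _ _
  haveI : Finite {l : List Bool // CP d k r n σ l} := finite_CP _ _ _ _ _
  let g : (Σ j : S, {y : List Bool // CP d k r (n - (j:ℕ)) (-σ - (j:ℕ)) y}) →
      {l : List Bool // CP d k r n σ l} :=
    fun p => ⟨true :: (List.replicate ((p.1 : ℕ) - 1) false ++ p.2.1),
      key p.1 p.1.2 p.2.1 p.2.2⟩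
  have hginj : Function.Injective g := by
    rintro ⟨⟨j, hj⟩, ⟨y, hy⟩⟩ ⟨⟨j', hj'⟩, ⟨y', hy'⟩⟩ heq
    simp only [g, Subtype.mk.injEq, List.cons.injEq, true_and] at heq
    rw [hS, Finset.mem_Icc] at hj hj'
    have hory : y = [] ∨ y.head? = some true := by
      rcases eq_or_ne y [] with h | h
      · exact Or.inl h
      · exact Or.inr (hy.2.1 h)
    have hory' : y' = [] ∨ y'.head? = some true := by
      rcases eq_or_ne y' [] with h | h
      · exact Or.inl h
      · exact Or.inr (hy'.2.1 h)
    have hjj : j - 1 = j' - 1 := by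
      have h1 := leadZeros_rep_app (j - 1) y hory
      have h2 := leadZeros_rep_app (j' - 1) y' hory'
      rw [← heq] at h2; rw [h1] at h2; omega
    have hjeq : j = j' := by omega
    subst hjeq
    have hyy : y = y' := by
      rw [hjj] at heq
      exact List.append_cancel_left heq
    subst hyy
    rfl
  have hgsurj : Function.Surjective g := by
    rintro ⟨l, hl⟩
    obtain ⟨hlen, hhead, hok, htr, hch⟩ := hl
    have hlne : l ≠ [] := by rintro rfl; simp at hlen; omega
    obtain ⟨b, t, rfl⟩ : ∃ b t, l = b :: t := by
      cases l with
      | nil => exact absurd rfl hlne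
      | cons b t => exact ⟨b, t, rfl⟩
    have hb : b = true := by have := hhead hlne; simpa using this
    subst hb
    have htmem : true ∈ t := by
      by_contra hcon
      have hall : t = List.replicate t.length false := by
        apply List.eq_replicate_of_mem
        intro b hb
        cases b
        · rfl
        · exact absurd hb hcon
      apply hσ
      have h1 : (true :: t) = true :: (List.replicate (n - 1) false ++ []) := by
        rw [List.append_nil]
        congr 1
        rw [hall]; congr 1; simp at hlen; omega
      rw [h1, part1 n [] (by omega)] at hch
      have : charge ([] : List Bool) = 0 := rfl
      rw [this] at hch; omega
    set m := leadZeros t with hm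
    obtain ⟨hdec, hdh⟩ := decomp t htmem
    set y := t.dropWhile (fun b => !b) with hy
    have hyne : 0 < y.length := by
      cases hq : y with
      | nil => rw [hq] at hdh; simp at hdh
      | cons a s => simp
    have hlrw : (true :: t) = true :: (List.replicate m false ++ y) := by rw [← hdec]
    rw [hlrw] at hok hch htr hlen
    have hgap := internalOK_gap d k m y hdh hok
    have hlen2 : n = 1 + m + y.length := by simp at hlen; omega
    have hjS : m + 1 ∈ S := by
      rw [hS, Finset.mem_Icc]; constructor <;> omega
    have hycp : CP d k r (n - (m+1)) (-σ - (m+1)) y := by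
      refine ⟨by omega, fun _ => hdh, internalOK_bwd d k m y hok, ?_, ?_⟩
      · rw [show (true :: (List.replicate m false ++ y))
            = (true :: List.replicate m false) ++ y by simp] at htr
        rwa [trailZeros_app _ _ (mem_true y hdh)] at htr
      · have hp := part1 (m+1) y (by omega)
        rw [Nat.add_sub_cancel] at hp
        rw [hp] at hch
        push_cast at hch ⊢
        linarith
    refine ⟨⟨⟨m + 1, hjS⟩, ⟨y, hycp⟩⟩, ?_⟩
    simp only [g, Subtype.mk.injEq]
    apply Subtype.ext
    show true :: (List.replicate (m + 1 - 1) false ++ y) = true :: t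
    rw [hlrw]
    congr 2
  -- count
  have e : {l : List Bool // CP d k r n σ l} ≃
      (Σ j : S, {y : List Bool // CP d k r (n - (j:ℕ)) (-σ - (j:ℕ)) y}) :=
    (Equiv.ofBijective g ⟨hginj, hgsurj⟩).symm
  have h1 : Cdkr d k r n σ = Nat.card {l : List Bool // CP d k r n σ l} := rfl
  rw [h1, Nat.card_congr e]
  haveI : ∀ j : S, Fintype {y : List Bool // CP d k r (n - (j:ℕ)) (-σ - (j:ℕ)) y} :=
    fun j => Fintype.ofFinite _
  rw [Nat.card_eq_fintype_card, Fintype.card_sigma]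
  rw [← Finset.sum_coe_sort S (fun j => Cdkr d k r (n - j) (-σ - j))]
  congr 1
  ext j
  rw [show Cdkr d k r (n - (j:ℕ)) (-σ - (j:ℕ))
      = Nat.card {y : List Bool // CP d k r (n - (j:ℕ)) (-σ - (j:ℕ)) y} from rfl]
  rw [Nat.card_eq_fintype_card]
end helpers

theorem stmt5 (d k r : ℕ) (hk : d ≤ k) :
    (∀ (j : ℕ) (y : List Bool), 1 ≤ j → (y = [] ∨ y.head? = some true) →
      charge (true :: (List.replicate (j - 1) false ++ y)) = -(charge y) - j) ∧
    (∀ (n : ℕ) (σ : ℤ), σ ≠ -(n : ℤ) → d + 1 ≤ n →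
      Cdkr d k r n σ =
        ∑ j ∈ Finset.Icc (d + 1) (min n (k + 1)), Cdkr d k r (n - j) (-σ - j)) := by
  constructor
  · intro j y hj _; exact part1 j y hj
  · intro n σ hσ hn; exact count_main d k r n σ hk hσ hn
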